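/- Under the stated hypotheses, the endomorphism 𝕁_CR of ℝ ⊕ V ⊕ ℝ satisfies 𝕁_CR ∘ 𝕁_CR = −id; i.e. 𝕁_CR is a complex structure on the tractor model space ℝ ⊕ V ⊕ ℝ. -/

import Mathlib

/- Setup: (V,g) an (n+1)-dimensional real vector space with a nondegenerate
symmetric bilinear form of signature (1,n) (encoded by an orthonormal-type basis),
a lightlike vector R, a 1-form α with α(R) = −1 and lightlike g-dual α^♯, and a
map J modelling the horizontal lift of the CR almost complex structure.  On the
tractor model space ℝ ⊕ V ⊕ ℝ with form ⟨(a,ξ,b),(a',ξ',b')⟩ = ab' + a'b + g(ξ,ξ')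
define 𝕁_CR(a,ξ,b) = (α(ξ), a·R + J(ξ) − b·α^♯, −g(R,ξ)). -/

/-- The endomorphism 𝕁_CR of ℝ ⊕ V ⊕ ℝ satisfies
𝕁_CR ∘ 𝕁_CR = −id, i.e. 𝕁_CR is a complex structure on the tractor model space. -/
theorem stmt5 (n : ℕ) (hn : 1 ≤ n)
    (V : Type) [AddCommGroup V] [Module ℝ V]
    (g : LinearMap.BilinForm ℝ V)
    (hgsym : ∀ x y, g x y = g y x)
    (b : Module.Basis (Fin (n + 1)) ℝ V)
    (hb : ∀ i j, g (b i) (b j) =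
      if i = j then (if i = (0 : Fin (n + 1)) then -1 else 1) else 0)
    (R : V) (hR : g R R = 0)
    (α : V →ₗ[ℝ] ℝ) (hαR : α R = -1)
    (αs : V) (hαs : ∀ x, g αs x = α x) (hαs0 : g αs αs = 0)
    (J : V →ₗ[ℝ] V)
    (hJR : J R = 0) (hJαs : J αs = 0)
    (hαJ : ∀ x, α (J x) = 0) (hgRJ : ∀ x, g R (J x) = 0)
    (hJJ : ∀ x, J (J x) = -(x + α x • R + g R x • αs))
    (JCR : ℝ × V × ℝ → ℝ × V × ℝ)
    (hJCR : ∀ (a : ℝ) (ξ : V) (c : ℝ),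
      JCR (a, ξ, c) = (α ξ, a • R + J ξ - c • αs, -(g R ξ))) :
    ∀ t : ℝ × V × ℝ, JCR (JCR t) = -t := by
  rintro ⟨a, ξ, c⟩
  have hααs : α αs = 0 := by rw [← hαs]; exact hαs0
  have hgRαs : g R αs = -1 := by rw [hgsym]; rw [hαs]; exact hαR
  rw [hJCR, hJCR, Prod.neg_mk, Prod.neg_mk, Prod.mk.injEq, Prod.mk.injEq]
  refine ⟨?_, ?_, ?_⟩
  · simp only [map_add, map_sub, map_smul, hαR, hαJ, hααs, smul_eq_mul]; ring
  · simp only [map_add, map_sub, map_smul, hJR, hJαs, hJJ, hαR, hαJ, hααs, hR, hgRJ, hgRαs,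
      smul_eq_mul]
    module
  · simp only [map_add, map_sub, map_smul, LinearMap.smul_apply, hR, hgRJ, hgRαs, smul_eq_mul]
    ring
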